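/- Dual representation of CVaR on a finite probability space: let Ω be a nonempty finite set, p : Ω → ℝ with p ≥ 0 and ∑_ω p(ω) = 1, let α ∈ [0,1), and let X : Ω → ℝ. Then inf_{η ∈ ℝ} ( η + (1−α)^{-1} · ∑_{ω∈Ω} p(ω) · max{X(ω) − η, 0} ) = sup { ∑_{ω∈Ω} μ(ω)·X(ω) : μ : Ω → ℝ, μ ≥ 0, ∑_ω μ(ω) = 1, and μ(ω) ≤ p(ω)/(1−α) for all ω ∈ Ω }. -/

import Mathlib

open Finset

/-- Dual representation of CVaR on a finite probability space:
the Rockafellar–Uryasev infimum equals the supremum of expectations over the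
polyhedral risk envelope `{μ ∈ Δ(Ω) : μ ≤ p/(1−α)}`. -/
theorem cvar_dual_representation {Ω : Type*} [Fintype Ω] [Nonempty Ω]
    (p : Ω → ℝ) (hp0 : ∀ ω, 0 ≤ p ω) (hp1 : ∑ ω, p ω = 1)
    (α : ℝ) (hα : α ∈ Set.Ico (0 : ℝ) 1) (X : Ω → ℝ) :
    (⨅ η : ℝ, η + (1 - α)⁻¹ * ∑ ω, p ω * max (X ω - η) 0) =
      sSup {r : ℝ | ∃ μ : Ω → ℝ, (∀ ω, 0 ≤ μ ω) ∧ (∑ ω, μ ω = 1) ∧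
        (∀ ω, μ ω ≤ p ω / (1 - α)) ∧ r = ∑ ω, μ ω * X ω} := by
  classical
  obtain ⟨hα0, hα1⟩ := hα
  have h1α : (0:ℝ) < 1 - α := by linarith
  set c : ℝ := (1 - α)⁻¹ with hc
  have hcpos : 0 < c := inv_pos.mpr h1α
  have hdiv : ∀ ω, p ω / (1 - α) = c * p ω := fun ω => div_eq_inv_mul _ _
  have hc1 : c * (1 - α) = 1 := inv_mul_cancel₀ (ne_of_gt h1α)
  -- weak duality
  have weak : ∀ (μ : Ω → ℝ), (∀ ω, 0 ≤ μ ω) → (∑ ω, μ ω = 1) →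
      (∀ ω, μ ω ≤ p ω / (1 - α)) → ∀ η : ℝ,
      ∑ ω, μ ω * X ω ≤ η + c * ∑ ω, p ω * max (X ω - η) 0 := by
    intro μ hμ0 hμ1 hμp η
    have key : ∑ ω, μ ω * X ω = η + ∑ ω, μ ω * (X ω - η) := by
      have : ∀ ω ∈ univ, μ ω * (X ω - η) = μ ω * X ω - μ ω * η := fun ω _ => by ring
      rw [Finset.sum_congr rfl this, Finset.sum_sub_distrib, ← Finset.sum_mul, hμ1]
      ring
    rw [key]
    have hle : ∑ ω, μ ω * (X ω - η) ≤ c * ∑ ω, p ω * max (X ω - η) 0 := by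
      rw [Finset.mul_sum]
      apply Finset.sum_le_sum
      intro ω _
      calc μ ω * (X ω - η) ≤ μ ω * max (X ω - η) 0 :=
            mul_le_mul_of_nonneg_left (le_max_left _ _) (hμ0 ω)
        _ ≤ (c * p ω) * max (X ω - η) 0 := by
            apply mul_le_mul_of_nonneg_right _ (le_max_right _ _)
            rw [← hdiv]; exact hμp ω
        _ = c * (p ω * max (X ω - η) 0) := by ring
    linarith
  -- p itself is feasible
  have hpfeas : ∀ ω, p ω ≤ p ω / (1 - α) := by
    intro ω
    rw [le_div_iff₀ h1α]
    nlinarith [hp0 ω]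
  -- construct the quantile ηstar
  have hVne : (Finset.image X univ).Nonempty := ⟨X (Classical.arbitrary Ω), mem_image_of_mem X (mem_univ _)⟩
  set V := Finset.image X univ with hV
  set T := V.filter (fun t => ∑ ω ∈ univ.filter (fun ω => t < X ω), p ω ≤ 1 - α) with hT
  have hTne : T.Nonempty := by
    refine ⟨V.max' hVne, mem_filter.mpr ⟨V.max'_mem hVne, ?_⟩⟩
    have : univ.filter (fun ω => V.max' hVne < X ω) = ∅ := by
      apply Finset.filter_eq_empty_iff.mpr
      intro ω _
      exact not_lt.mpr (V.le_max' (X ω) (mem_image_of_mem X (mem_univ _)))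
    rw [this, Finset.sum_empty]
    linarith
  set η : ℝ := T.min' hTne with hη
  have hηT : η ∈ T := T.min'_mem hTne
  have h1 : ∑ ω ∈ univ.filter (fun ω => η < X ω), p ω ≤ 1 - α := (mem_filter.mp hηT).2
  -- quantile property: 1 - α ≤ P(X ≥ η)
  have h2 : 1 - α ≤ ∑ ω ∈ univ.filter (fun ω => η ≤ X ω), p ω := by
    by_cases hex : (V.filter (fun t => t < η)).Nonempty
    · set t' := (V.filter (fun t => t < η)).max' hex with ht'
      have ht'mem := (V.filter (fun t => t < η)).max'_mem hex
      have ht'V : t' ∈ V := (mem_filter.mp ht'mem).1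
      have ht'lt : t' < η := (mem_filter.mp ht'mem).2
      have hfeq : univ.filter (fun ω => η ≤ X ω) = univ.filter (fun ω => t' < X ω) := by
        ext ω
        simp only [mem_filter, mem_univ, true_and]
        constructor
        · intro h; linarith
        · intro h
          by_contra hn
          push_neg at hn
          have : X ω ∈ V.filter (fun t => t < η) :=
            mem_filter.mpr ⟨mem_image_of_mem X (mem_univ _), hn⟩
          exact absurd ((V.filter (fun t => t < η)).le_max' _ this) (not_le.mpr h)
      rw [hfeq]
      have ht'notT : t' ∉ T := fun hmem => absurd (T.min'_le _ hmem) (not_le.mpr ht'lt)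
      have : ¬ (∑ ω ∈ univ.filter (fun ω => t' < X ω), p ω ≤ 1 - α) := by
        intro h
        exact ht'notT (mem_filter.mpr ⟨ht'V, h⟩)
      linarith [not_le.mp this]
    · have : univ.filter (fun ω => η ≤ X ω) = univ := by
        apply Finset.filter_true_of_mem
        intro ω _
        by_contra hn
        push_neg at hn
        exact hex ⟨X ω, mem_filter.mpr ⟨mem_image_of_mem X (mem_univ _), hn⟩⟩
      rw [this, hp1]; linarith
  -- define PA, PB
  set A := univ.filter (fun ω => η < X ω) with hA
  set B := univ.filter (fun ω => X ω = η) with hB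
  set PA := ∑ ω ∈ A, p ω with hPA
  set PB := ∑ ω ∈ B, p ω with hPB
  have hPA0 : 0 ≤ PA := Finset.sum_nonneg fun ω _ => hp0 ω
  have hPB0 : 0 ≤ PB := Finset.sum_nonneg fun ω _ => hp0 ω
  have hAB : univ.filter (fun ω => η ≤ X ω) = A ∪ B := by
    ext ω
    simp only [hA, hB, mem_filter, mem_union, mem_univ, true_and]
    constructor
    · intro h
      rcases lt_or_eq_of_le h with h' | h'
      · exact Or.inl h'
      · exact Or.inr h'.symm
    · rintro (h | h)
      · exact le_of_lt h
      · exact le_of_eq h.symm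
  have hABdisj : Disjoint A B := by
    rw [Finset.disjoint_filter]
    intro ω _ h1' h2'
    exact absurd h2' (ne_of_gt h1')
  have h2' : 1 - α ≤ PA + PB := by
    rw [hPA, hPB, ← Finset.sum_union hABdisj, ← hAB]
    exact h2
  -- define lam and μ*
  set lam : ℝ := if PB = 0 then 0 else (1 - c * PA) / (c * PB) with hlam
  have hcPA : c * PA ≤ 1 := by
    calc c * PA ≤ c * (1 - α) := by nlinarith
      _ = 1 := hc1
  have hlam0 : 0 ≤ lam := by
    rw [hlam]
    split_ifs with h
    · exact le_refl 0
    · apply div_nonneg (by linarith) (le_of_lt (by positivity))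
  have hlam1 : lam ≤ 1 := by
    rw [hlam]
    split_ifs with h
    · exact zero_le_one
    · rw [div_le_one (by positivity)]
      have : 1 ≤ c * (PA + PB) := by
        calc 1 = c * (1 - α) := hc1.symm
          _ ≤ c * (PA + PB) := by nlinarith
      nlinarith
  -- optimal μ
  set μs : Ω → ℝ := fun ω => if η < X ω then c * p ω else if X ω = η then lam * (c * p ω) else 0
    with hμs
  have hμs0 : ∀ ω, 0 ≤ μs ω := by
    intro ω
    rw [hμs]
    dsimp only
    split_ifs with h h'
    · exact mul_nonneg hcpos.le (hp0 ω)
    · exact mul_nonneg hlam0 (mul_nonneg hcpos.le (hp0 ω))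
    · exact le_refl 0
  have hμsle : ∀ ω, μs ω ≤ p ω / (1 - α) := by
    intro ω
    rw [hdiv, hμs]
    dsimp only
    split_ifs with h h'
    · exact le_refl _
    · nlinarith [mul_nonneg hcpos.le (hp0 ω), hlam1, hlam0]
    · exact mul_nonneg hcpos.le (hp0 ω)
  have hμs1 : ∑ ω, μs ω = 1 := by
    have hsplit : ∑ ω, μs ω = c * PA + lam * (c * PB) := by
      rw [← Finset.sum_filter_add_sum_filter_not univ (fun ω => η < X ω) μs]
      congr 1
      · rw [hPA, Finset.mul_sum, ← hA]
        apply Finset.sum_congr rfl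
        intro ω hω
        rw [hA] at hω
        have := (mem_filter.mp hω).2
        rw [hμs]; dsimp only; rw [if_pos this]
      · rw [← Finset.sum_filter_add_sum_filter_not
          (univ.filter (fun ω => ¬ η < X ω)) (fun ω => X ω = η) μs]
        have e2 : ∑ ω ∈ (univ.filter (fun ω => ¬ η < X ω)).filter (fun ω => ¬ X ω = η), μs ω = 0 := by
          apply Finset.sum_eq_zero
          intro ω hω
          obtain ⟨hω1, hω2⟩ := mem_filter.mp hω
          have hω3 := (mem_filter.mp hω1).2
          rw [hμs]; dsimp only; rw [if_neg hω3, if_neg hω2]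
        have e1 : ∑ ω ∈ (univ.filter (fun ω => ¬ η < X ω)).filter (fun ω => X ω = η), μs ω
            = lam * (c * PB) := by
          have hBeq : (univ.filter (fun ω => ¬ η < X ω)).filter (fun ω => X ω = η) = B := by
            rw [hB]
            ext ω
            simp only [mem_filter, mem_univ, true_and, not_lt]
            constructor
            · rintro ⟨_, h⟩; exact h
            · intro h; exact ⟨le_of_eq h, h⟩
          rw [hBeq, hPB, Finset.mul_sum, Finset.mul_sum]
          apply Finset.sum_congr rfl
          intro ω hω
          rw [hB] at hω
          have heq := (mem_filter.mp hω).2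
          have hnlt : ¬ η < X ω := by rw [heq]; exact lt_irrefl η
          rw [hμs]; dsimp only; rw [if_neg hnlt, if_pos heq]
        rw [e1, e2, add_zero]
    rw [hsplit]
    by_cases h : PB = 0
    · have hPAeq : PA = 1 - α := le_antisymm h1 (by linarith [h2'.trans_eq (by rw [h, add_zero])])
      rw [h, hPAeq]
      simp [hc1]
    · rw [hlam, if_neg h]
      have hcPB : c * PB ≠ 0 := by positivity
      field_simp
      ring
  -- strong duality: value at η equals expectation under μs
  have hstrong : η + c * ∑ ω, p ω * max (X ω - η) 0 = ∑ ω, μs ω * X ω := by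
    have hterm : ∀ ω ∈ univ, μs ω * (X ω - η) = c * (p ω * max (X ω - η) 0) := by
      intro ω _
      rw [hμs]
      dsimp only
      split_ifs with h h'
      · rw [max_eq_left (by linarith)]; ring
      · rw [h', sub_self, max_self, mul_zero, mul_zero, mul_zero]
      · have hlt : X ω - η ≤ 0 := by
          rcases lt_trichotomy (X ω) η with h1' | h1' | h1'
          · linarith
          · exact absurd h1' h'
          · exact absurd h1' h
        rw [max_eq_right hlt, zero_mul, mul_zero, mul_zero]
    have : ∑ ω, μs ω * (X ω - η) = c * ∑ ω, p ω * max (X ω - η) 0 := by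
      rw [Finset.mul_sum]
      exact Finset.sum_congr rfl hterm
    have expand : ∑ ω, μs ω * (X ω - η) = ∑ ω, μs ω * X ω - η := by
      have : ∀ ω ∈ univ, μs ω * (X ω - η) = μs ω * X ω - μs ω * η := fun ω _ => by ring
      rw [Finset.sum_congr rfl this, Finset.sum_sub_distrib, ← Finset.sum_mul, hμs1, one_mul]
    linarith
  -- boundedness facts
  set S := {r : ℝ | ∃ μ : Ω → ℝ, (∀ ω, 0 ≤ μ ω) ∧ (∑ ω, μ ω = 1) ∧
        (∀ ω, μ ω ≤ p ω / (1 - α)) ∧ r = ∑ ω, μ ω * X ω} with hS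
  have hSne : S.Nonempty := ⟨∑ ω, p ω * X ω, p, hp0, hp1, hpfeas, rfl⟩
  have hSbdd : BddAbove S := by
    refine ⟨0 + c * ∑ ω, p ω * max (X ω - 0) 0, ?_⟩
    rintro r ⟨μ, hμ0, hμ1, hμp, rfl⟩
    exact weak μ hμ0 hμ1 hμp 0
  have hbddBelow : BddBelow (Set.range (fun η : ℝ => η + c * ∑ ω, p ω * max (X ω - η) 0)) := by
    refine ⟨∑ ω, p ω * X ω, ?_⟩
    rintro y ⟨η', rfl⟩
    exact weak p hp0 hp1 hpfeas η'
  apply le_antisymm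
  · calc (⨅ η' : ℝ, η' + c * ∑ ω, p ω * max (X ω - η') 0)
        ≤ η + c * ∑ ω, p ω * max (X ω - η) 0 := ciInf_le hbddBelow η
      _ = ∑ ω, μs ω * X ω := hstrong
      _ ≤ sSup S := le_csSup hSbdd ⟨μs, hμs0, hμs1, hμsle, rfl⟩
  · apply csSup_le hSne
    rintro r ⟨μ, hμ0, hμ1, hμp, rfl⟩
    exact le_ciInf (fun η' => weak μ hμ0 hμ1 hμp η')
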